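/- Let X be an integrable random variable with E[exp(X)] < ∞, Var(X) ≥ c₁ > 0, and X − E[X] ≥ −1 almost surely. Then ln(E[exp(X)]) ≥ E[X] + ln(1 + c₁/3). -/

import Mathlib

open MeasureTheory ProbabilityTheory

lemma exp_ge_one_add_add_sq_third {y : ℝ} (hy : -1 ≤ y) :
    1 + y + y ^ 2 / 3 ≤ Real.exp y := by
  rcases le_or_gt 0 y with h | h
  · have h1 : (1 : ℝ) + y / 3 ≤ Real.exp (y / 3) := by
      have := Real.add_one_le_exp (y / 3); linarith
    have h0 : (0 : ℝ) ≤ 1 + y / 3 := by linarith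
    have h2 : (1 + y / 3) ^ 3 ≤ Real.exp (y / 3) ^ 3 := by
      exact pow_le_pow_left₀ h0 h1 3
    have h3 : Real.exp (y / 3) ^ 3 = Real.exp y := by
      rw [← Real.exp_nat_mul]; congr 1; push_cast; ring
    nlinarith [h2, h3]
  · have habs : |y| ≤ 1 := abs_le.2 ⟨hy, h.le.trans zero_le_one⟩
    have hb := Real.exp_bound habs (by norm_num : 0 < 5)
    rw [abs_sub_le_iff] at hb
    have h1 := hb.2
    have hy5 : |y| ^ 5 = -(y ^ 5) := by
      rw [abs_of_nonpos h.le]; ring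
    simp only [Finset.sum_range_succ, Finset.sum_range_zero] at h1
    norm_num [Nat.factorial] at h1
    rw [hy5] at h1
    have h4 : 0 ≤ y ^ 2 * (1 + y) := mul_nonneg (sq_nonneg y) (by linarith)
    have h5 : 0 ≤ y ^ 4 * (1/24 + y/100) := by
      apply mul_nonneg (by positivity); linarith
    nlinarith [h1, h4, h5]

/-- Quantitative reverse Jensen: if `Var(X) ≥ c₁ > 0` and `X - E X ≥ -1` a.s., then
`ln E[e^X] ≥ E X + ln(1 + c₁/3)`. -/
theorem log_mgf_ge_mean_add
    {Ω : Type*} [MeasurableSpace Ω] (P : Measure Ω) [IsProbabilityMeasure P]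
    (X : Ω → ℝ) (c₁ : ℝ) (hc₁ : 0 < c₁)
    (hXint : Integrable X P)
    (hX2 : Integrable (fun ω => X ω ^ 2) P)
    (hexp : Integrable (fun ω => Real.exp (X ω)) P)
    (hvar : c₁ ≤ variance X P)
    (hlb : ∀ᵐ ω ∂P, -1 ≤ X ω - ∫ x, X x ∂P) :
    (∫ ω, X ω ∂P) + Real.log (1 + c₁ / 3) ≤
      Real.log (∫ ω, Real.exp (X ω) ∂P) := by
  set m := ∫ ω, X ω ∂P with hm
  have hmem : MemLp X 2 P :=
    (memLp_two_iff_integrable_sq hXint.aestronglyMeasurable).2 hX2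
  have hint2 : Integrable (fun ω => (X ω - m) ^ 2) P := by
    have : (fun ω => (X ω - m) ^ 2)
        = fun ω => X ω ^ 2 - (2 * m) * X ω + m ^ 2 := by ext ω; ring
    rw [this]
    exact (hX2.sub (hXint.const_mul _)).add (integrable_const _)
  have hvar_eq : variance X P = ∫ ω, (X ω - m) ^ 2 ∂P := by
    rw [variance_eq_integral hXint.aemeasurable]
  have hg : Integrable (fun ω => Real.exp m * (1 + (X ω - m) + (X ω - m) ^ 2 / 3)) P := by
    apply Integrable.const_mul
    exact ((integrable_const 1).add (hXint.sub (integrable_const m))).add (hint2.div_const 3)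
  have hmono : ∀ᵐ ω ∂P,
      Real.exp m * (1 + (X ω - m) + (X ω - m) ^ 2 / 3) ≤ Real.exp (X ω) := by
    filter_upwards [hlb] with ω hω
    have h1 := exp_ge_one_add_add_sq_third hω
    have h2 : Real.exp m * Real.exp (X ω - m) = Real.exp (X ω) := by
      rw [← Real.exp_add]; ring_nf
    calc Real.exp m * (1 + (X ω - m) + (X ω - m) ^ 2 / 3)
        ≤ Real.exp m * Real.exp (X ω - m) :=
          mul_le_mul_of_nonneg_left h1 (Real.exp_pos m).le
      _ = Real.exp (X ω) := h2
  have hineq : Real.exp m * (1 + variance X P / 3) ≤ ∫ ω, Real.exp (X ω) ∂P := by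
    have hkey := integral_mono_ae hg hexp hmono
    have hcalc : ∫ ω, Real.exp m * (1 + (X ω - m) + (X ω - m) ^ 2 / 3) ∂P
        = Real.exp m * (1 + variance X P / 3) := by
      rw [integral_const_mul]
      congr 1
      have hA : Integrable (fun ω => 1 + (X ω - m)) P :=
        (integrable_const 1).add (hXint.sub (integrable_const m))
      have e1 : ∫ ω, (1 + (X ω - m) + (X ω - m) ^ 2 / 3) ∂P
          = (∫ ω, (1 + (X ω - m)) ∂P) + ∫ ω, (X ω - m) ^ 2 / 3 ∂P :=
        integral_add hA (hint2.div_const 3)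
      have e2 : ∫ ω, (1 + (X ω - m)) ∂P
          = (∫ _ω, (1 : ℝ) ∂P) + ∫ ω, (X ω - m) ∂P :=
        integral_add (integrable_const 1) (hXint.sub (integrable_const m))
      have e3 : ∫ ω, (X ω - m) ∂P = (∫ ω, X ω ∂P) - ∫ _ω, m ∂P :=
        integral_sub hXint (integrable_const m)
      have e4 : ∫ ω, (X ω - m) ^ 2 / 3 ∂P = (∫ ω, (X ω - m) ^ 2 ∂P) / 3 :=
        integral_div 3 _
      rw [e1, e2, e3, e4, ← hvar_eq]
      simp [hm]
    rwa [hcalc] at hkey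
  have hpos : (0 : ℝ) < 1 + c₁ / 3 := by linarith
  have h2 : Real.exp m * (1 + c₁ / 3) ≤ ∫ ω, Real.exp (X ω) ∂P := by
    refine le_trans ?_ hineq
    have : (1 : ℝ) + c₁ / 3 ≤ 1 + variance X P / 3 := by linarith
    exact mul_le_mul_of_nonneg_left this (Real.exp_pos m).le
  have hpos2 : (0 : ℝ) < Real.exp m * (1 + c₁ / 3) := by positivity
  calc m + Real.log (1 + c₁ / 3)
      = Real.log (Real.exp m * (1 + c₁ / 3)) := by
        rw [Real.log_mul (Real.exp_ne_zero m) (ne_of_gt hpos), Real.log_exp]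
    _ ≤ Real.log (∫ ω, Real.exp (X ω) ∂P) := Real.log_le_log hpos2 h2
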